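/- Let κ > 0, γ > 0 and δ ∈ ℝ with δ > −κ/γ and δ ≠ 0, and set δ₀ := δ if δ > 0 and δ₀ := κ/γ if −κ/γ < δ < 0. Then there exists ε₁ > 0 such that for every real g with 0 ≤ g ≤ γ and all z₁, z₂ ∈ ℝ one has g·z₁² − (δ₀ − δ)·g·z₁·z₂ + δ₀·κ·z₂² ≥ ε₁·(g·z₁² + z₂²). -/

import Mathlib

/-- Lemma 3.1 (algebraic core): positive definiteness of the quadratic form of the
entropy-variable diffusion matrix `B(w)`. -/
theorem stmt_0 (κ γ δ δ₀ : ℝ) (hκ : 0 < κ) (hγ : 0 < γ)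
    (hδ : -κ / γ < δ) (hδne : δ ≠ 0)
    (hδ₀ : δ₀ = if 0 < δ then δ else κ / γ) :
    ∃ ε₁ > 0, ∀ g : ℝ, 0 ≤ g → g ≤ γ → ∀ z₁ z₂ : ℝ,
      g * z₁ ^ 2 - (δ₀ - δ) * g * z₁ * z₂ + δ₀ * κ * z₂ ^ 2 ≥
        ε₁ * (g * z₁ ^ 2 + z₂ ^ 2) := by
  by_cases hpos : 0 < δ
  · refine ⟨min 1 (δ * κ), lt_min one_pos (mul_pos hpos hκ), ?_⟩
    intro g hg0 hgγ z₁ z₂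
    rw [hδ₀, if_pos hpos]
    have h1 : min 1 (δ * κ) ≤ 1 := min_le_left _ _
    have h2 : min 1 (δ * κ) ≤ δ * κ := min_le_right _ _
    nlinarith [sq_nonneg z₁, sq_nonneg z₂, mul_nonneg hg0 (sq_nonneg z₁),
      mul_nonneg (mul_nonneg hg0 (sq_nonneg z₁)) (sub_nonneg.mpr h1)]
  · have hδneg : δ < 0 := lt_of_le_of_ne (not_lt.mp hpos) hδne
    have hδγ : -κ < δ * γ := by
      have := (div_lt_iff₀ hγ).mp hδ
      linarith
    have hx0 : δ * γ < 0 := mul_neg_of_neg_of_pos hδneg hγ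
    set ε : ℝ := (κ + δ * γ) * (3 * κ - δ * γ) / (4 * (γ + κ ^ 2)) with hε
    set c : ℝ := κ / γ - δ with hc
    clear_value ε c
    have hden : 0 < 4 * (γ + κ ^ 2) := by positivity
    have hεpos : 0 < ε := by
      rw [hε]
      apply div_pos _ hden
      apply mul_pos <;> nlinarith
    have hcpos : 0 < c := by
      rw [hc]
      have : 0 < κ / γ := div_pos hκ hγ
      linarith
    have hε1 : ε < 1 := by
      rw [hε, div_lt_one hden]
      nlinarith [mul_pos hκ (neg_pos.mpr hx0), sq_nonneg (δ * γ)]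
    have hεκ : ε < κ ^ 2 / γ := by
      rw [hε, div_lt_div_iff₀ hden hγ]
      nlinarith [mul_pos (mul_pos hκ hγ) (neg_pos.mpr hx0),
        mul_nonneg (sq_nonneg (δ * γ)) hγ.le]
    have hdisc : c ^ 2 * γ ≤ 4 * (1 - ε) * (κ ^ 2 / γ - ε) := by
      have h1 : ε * (4 * (γ + κ ^ 2)) = (κ + δ * γ) * (3 * κ - δ * γ) := by
        rw [hε]; field_simp
      have hq : κ ^ 2 / γ * γ = κ ^ 2 := div_mul_cancel₀ _ hγ.ne'
      have h2 : 4 * (1 - ε) * (κ ^ 2 / γ - ε) * γ = 4 * (1 - ε) * (κ ^ 2 - ε * γ) := by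
        linear_combination (4 * (1 - ε)) * hq
      have hc2 : c ^ 2 * γ * γ = (κ - δ * γ) ^ 2 := by
        rw [hc]; field_simp
      rw [← mul_le_mul_iff_left₀ hγ, h2]
      nlinarith [h1, hc2, mul_nonneg (sq_nonneg ε) hγ.le]
    have hεκ' : 0 ≤ κ ^ 2 / γ - ε := by linarith
    refine ⟨ε, hεpos, ?_⟩
    have hδ₀' : δ₀ = κ / γ := by rw [hδ₀, if_neg hpos]
    have hδ₀κ : δ₀ * κ = κ ^ 2 / γ := by rw [hδ₀']; field_simp
    have hδ₀δ : δ₀ - δ = c := by rw [hδ₀', hc]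
    clear hε hc hδ₀ hδ₀'
    intro g hg0 hgγ z₁ z₂
    have key : (1 - ε) * g * z₁ ^ 2 - c * g * z₁ * z₂ + (κ ^ 2 / γ - ε) * z₂ ^ 2 ≥ 0 := by
      rcases eq_or_lt_of_le hg0 with h | hgpos
      · have := mul_nonneg hεκ' (sq_nonneg z₂)
        rw [← h]; nlinarith
      · have hfac : 0 < 4 * (1 - ε) * g := by nlinarith
        have hA : c ^ 2 * g ^ 2 ≤ c ^ 2 * γ * g := by
          nlinarith [mul_nonneg (mul_nonneg (sq_nonneg c) hg0) (sub_nonneg.mpr hgγ)]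
        have hB : c ^ 2 * γ * g ≤ 4 * (1 - ε) * (κ ^ 2 / γ - ε) * g :=
          mul_le_mul_of_nonneg_right hdisc hg0
        have hprod : 0 ≤ (4 * (1 - ε) * (κ ^ 2 / γ - ε) * g - c ^ 2 * g ^ 2) * z₂ ^ 2 :=
          mul_nonneg (by linarith) (sq_nonneg z₂)
        have hsq := sq_nonneg (2 * (1 - ε) * g * z₁ - c * g * z₂)
        have hid : 4 * (1 - ε) * g *
            ((1 - ε) * g * z₁ ^ 2 - c * g * z₁ * z₂ + (κ ^ 2 / γ - ε) * z₂ ^ 2)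
            = (2 * (1 - ε) * g * z₁ - c * g * z₂) ^ 2
              + (4 * (1 - ε) * (κ ^ 2 / γ - ε) * g - c ^ 2 * g ^ 2) * z₂ ^ 2 := by
          ring
        have hmul : 0 ≤ 4 * (1 - ε) * g *
            ((1 - ε) * g * z₁ ^ 2 - c * g * z₁ * z₂ + (κ ^ 2 / γ - ε) * z₂ ^ 2) := by
          rw [hid]; linarith [hsq, hprod]
        exact nonneg_of_mul_nonneg_right hmul hfac
    have expand : g * z₁ ^ 2 - (δ₀ - δ) * g * z₁ * z₂ + δ₀ * κ * z₂ ^ 2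
        - ε * (g * z₁ ^ 2 + z₂ ^ 2)
        = (1 - ε) * g * z₁ ^ 2 - c * g * z₁ * z₂ + (κ ^ 2 / γ - ε) * z₂ ^ 2 := by
      rw [hδ₀κ, hδ₀δ]; ring
    linarith [key, expand.ge, expand.le]
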